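/- Let $V$ be a vertex algebra. A linear map $f_z : V \otimes V \to V((z))$ gives a first order deformation $a\,{}_z^t\, b = a\,{}_z\, b + t f_z(a,b)$ of $V$ (i.e. all vertex algebra axioms hold modulo $t^2$ with unchanged vacuum $\mathbf{1}$ and translation $D$) if and only if $f \in Z^2(V,V)$. -/
import Mathlib


/- Coefficient-wise formalization of vertex algebras:
a series `w ∈ V((z))` is encoded by its coefficient function `ℤ → V`
(the value at `n` being the coefficient of `z^n`), and a field/product
`a ⊗ b ↦ a_z b ∈ V((z))` by a map `V → V → ℤ → V`. -/

namespace VertexCohomology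

open scoped BigOperators

section Defs

variable (𝕜 : Type*) [Field 𝕜] [CharZero 𝕜]
variable {V W M : Type*} [AddCommGroup V] [Module 𝕜 V] [AddCommGroup M] [Module 𝕜 M]

/-- Coefficient of `z^n` in `e^{z d} w(z)`, where `w` is a series with coefficients `w n`. -/
noncomputable def ezd (d : M →ₗ[𝕜] M) (w : ℤ → M) : ℤ → M :=
  fun n => ∑ᶠ k : ℕ, ((k.factorial : 𝕜)⁻¹) • (d ^ k) (w (n - (k : ℤ)))

/-- Coefficient of `z^n` in `w(-z)`. -/
def negz (w : ℤ → M) : ℤ → M := fun n => ((n.negOnePow : ℤ)) • w n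

/-- Coefficient of `z^n` in `(d/dz) w(z)`. -/
def derivz (w : ℤ → M) : ℤ → M := fun n => (n + 1) • w (n + 1)

/-- The constant series with value `a`. -/
def unitSeries (a : M) : ℤ → M := fun n => if n = 0 then a else 0

/-- Coefficient of `z^m w^n` in `(z+w)^l · F(z,w)`, where `F m n` is the coefficient
of `z^m w^n` of a formal series in two variables. -/
def mulZW (l : ℕ) (F : ℤ → ℤ → M) : ℤ → ℤ → M :=
  fun m n => ∑ k ∈ Finset.range (l + 1), (l.choose k : ℤ) • F (m - ((l - k : ℕ) : ℤ)) (n - (k : ℤ))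

/-- Coefficient of `x^m y^n` in `(x-y)^l · F(x,y)`. -/
def mulZmW (l : ℕ) (F : ℤ → ℤ → M) : ℤ → ℤ → M :=
  fun m n => ∑ k ∈ Finset.range (l + 1),
    ((-1 : ℤ) ^ k * (l.choose k : ℤ)) • F (m - ((l - k : ℕ) : ℤ)) (n - (k : ℤ))

/-- Coefficient of `z^m w^n` in `F(a, ·)_{z+w}` applied to the series `u` in the
variable `w`; here `(z+w)^j` is expanded in nonnegative powers of `w`:
`(z+w)^j = ∑_{i ≥ 0} C(j,i) z^{j-i} w^i`. -/
noncomputable def shiftComp (F : V → W → ℤ → M) (a : V) (u : ℤ → W) : ℤ → ℤ → M :=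
  fun m n => ∑ᶠ i : ℕ, (Ring.choose (m + (i : ℤ)) i) • F a (u (n - (i : ℤ))) (m + (i : ℤ))

/-- The axioms of a vertex algebra, stated coefficient-wise:
`Y a b n` is the coefficient of `z^n` in `a_z b`. -/
structure IsVertexAlg (Y : V → V → ℤ → V) (one : V) (D : V →ₗ[𝕜] V) : Prop where
  linear_left : ∀ (b : V) (n : ℤ), IsLinearMap 𝕜 (fun a => Y a b n)
  linear_right : ∀ (a : V) (n : ℤ), IsLinearMap 𝕜 (fun b => Y a b n)
  trunc : ∀ a b, ∃ N : ℤ, ∀ n < N, Y a b n = 0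
  unit_left : ∀ a, Y one a = unitSeries a
  unit_right : ∀ a, Y a one = ezd 𝕜 D (unitSeries a)
  transl : ∀ a b, Y (D a) b = derivz (Y a b)
  derivation : ∀ a b n, D (Y a b n) = Y (D a) b n + Y a (D b) n
  comm : ∀ a b, Y a b = ezd 𝕜 D (negz (Y b a))
  assoc : ∀ a b c, ∃ l : ℕ,
    mulZW l (fun m n => Y (Y a b m) c n) = mulZW l (shiftComp Y a (Y b c))

/-- The axioms of a module over a vertex algebra, stated coefficient-wise. -/
structure IsVModule (Y : V → V → ℤ → V) (one : V) (D : V →ₗ[𝕜] V)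
    (YM : V → M → ℤ → M) (d : M →ₗ[𝕜] M) : Prop where
  linear_left : ∀ (u : M) (n : ℤ), IsLinearMap 𝕜 (fun a => YM a u n)
  linear_right : ∀ (a : V) (n : ℤ), IsLinearMap 𝕜 (fun u => YM a u n)
  trunc : ∀ a u, ∃ N : ℤ, ∀ n < N, YM a u n = 0
  unit : ∀ u, YM one u = unitSeries u
  transl : ∀ a u, YM (D a) u = derivz (YM a u)
  derivation : ∀ a u n, d (YM a u n) = YM (D a) u n + YM a (d u) n
  assoc : ∀ a b u, ∃ l : ℕ,
    mulZW l (fun m n => YM (Y a b m) u n) = mulZW l (shiftComp YM a (YM b u))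

/-- The right action `u_z a := e^{z d}(a_{-z} u)` of `V` on `M`. -/
noncomputable def rAct (YM : V → M → ℤ → M) (d : M →ₗ[𝕜] M) (u : M) (a : V) : ℤ → M :=
  ezd 𝕜 d (negz (YM a u))

/-- `(δ₁ g)_z (a,b) = a_z g(b) - g(a_z b) + g(a)_z b`. -/
noncomputable def delta1 (Y : V → V → ℤ → V) (YM : V → M → ℤ → M) (d : M →ₗ[𝕜] M)
    (g : V → M) (a b : V) : ℤ → M :=
  fun n => YM a (g b) n - g (Y a b n) + rAct 𝕜 YM d (g a) b n

/-- Membership in `C²(V,M)`. -/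
structure IsC2 (one : V) (D : V →ₗ[𝕜] V) (d : M →ₗ[𝕜] M) (f : V → V → ℤ → M) : Prop where
  linear_left : ∀ (b : V) (n : ℤ), IsLinearMap 𝕜 (fun a => f a b n)
  linear_right : ∀ (a : V) (n : ℤ), IsLinearMap 𝕜 (fun b => f a b n)
  trunc : ∀ a b, ∃ N : ℤ, ∀ n < N, f a b n = 0
  unit_right : ∀ a, f a one = 0
  unit_left : ∀ b, f one b = 0
  transl : ∀ a b, derivz (f a b) = f (D a) b
  derivation : ∀ a b n, d (f a b n) = f (D a) b n + f a (D b) n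
  symm : ∀ a b, f a b = ezd 𝕜 d (negz (f b a))

/-- The 2-cocycle condition: for all `a,b,c` there is `N` with
`(x+z)^N [f_z(a_x b, c) + f_x(a,b)_z c] = (x+z)^N [a_{x+z} f_z(b,c) + f_{x+z}(a, b_z c)]`,
coefficients taken at `x^m z^n`, `(x+z)^j` expanded in nonnegative powers of `z`. -/
def Cocycle (Y : V → V → ℤ → V) (YM : V → M → ℤ → M) (d : M →ₗ[𝕜] M)
    (f : V → V → ℤ → M) : Prop :=
  ∀ a b c : V, ∃ N : ℕ,
    mulZW N (fun m n => f (Y a b m) c n + rAct 𝕜 YM d (f a b m) c n)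
      = mulZW N (fun m n => shiftComp YM a (f b c) m n + shiftComp f a (Y b c) m n)

/-- The square-zero extension product on `V ⊕ M`:
`(a,u)_z (b,v) = (a_z b, a_z v + u_z b + ψ_z(a,b))`. -/
noncomputable def extY (Y : V → V → ℤ → V) (YM : V → M → ℤ → M) (d : M →ₗ[𝕜] M)
    (ψ : V → V → ℤ → M) : V × M → V × M → ℤ → V × M :=
  fun p q n => (Y p.1 q.1 n, YM p.1 q.2 n + rAct 𝕜 YM d p.2 q.1 n + ψ p.1 q.1 n)

/-- The first-order deformed product on `V[t]/(t²) ≃ V × V` (first component the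
constant term, second the coefficient of `t`): `a_z^t b = a_z b + t f_z(a,b)`. -/
def defY (Y : V → V → ℤ → V) (f : V → V → ℤ → V) : V × V → V × V → ℤ → V × V :=
  fun p q n => (Y p.1 q.1 n, Y p.1 q.2 n + Y p.2 q.1 n + f p.1 q.1 n)

end Defs

set_option linter.unusedSectionVars false

section Helpers

variable {𝕜 : Type*} [Field 𝕜] [CharZero 𝕜]
variable {V W M : Type*} [AddCommGroup V] [Module 𝕜 V] [AddCommGroup W] [Module 𝕜 W]
  [AddCommGroup M] [Module 𝕜 M]

/-- Truncation from below. -/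
def HasTrunc (w : ℤ → M) : Prop := ∃ N : ℤ, ∀ n < N, w n = 0

lemma HasTrunc.add {g h : ℤ → M} (hg : HasTrunc g) (hh : HasTrunc h) :
    HasTrunc (fun n => g n + h n) := by
  obtain ⟨N1, h1⟩ := hg
  obtain ⟨N2, h2⟩ := hh
  refine ⟨min N1 N2, fun n hn => ?_⟩
  show g n + h n = 0
  rw [h1 n (lt_of_lt_of_le hn (min_le_left _ _)), h2 n (lt_of_lt_of_le hn (min_le_right _ _)),
    add_zero]

lemma HasTrunc.neg {g : ℤ → M} (hg : HasTrunc g) : HasTrunc (negz g) := by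
  obtain ⟨N, h⟩ := hg
  exact ⟨N, fun n hn => by simp [negz, h n hn]⟩

lemma hasTrunc_unitSeries (a : M) : HasTrunc (unitSeries a) :=
  ⟨0, fun n hn => if_neg (by omega)⟩

lemma supp_fin {α : Type*} [Zero α] {g : ℕ → α} (K : ℕ) (h : ∀ k, K ≤ k → g k = 0) :
    (Function.support g).Finite :=
  Set.Finite.subset (Finset.range K).finite_toSet fun k hk => by
    simp only [Finset.coe_range, Set.mem_Iio]
    by_contra hlt
    exact hk (h k (le_of_not_gt hlt))

lemma ezd_supp (D : M →ₗ[𝕜] M) {w : ℤ → M} (hw : HasTrunc w) (n : ℤ) :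
    (Function.support fun k : ℕ => ((k.factorial : 𝕜)⁻¹) • (D ^ k) (w (n - (k : ℤ)))).Finite := by
  obtain ⟨N, hN⟩ := hw
  apply supp_fin (n - N + 1).toNat
  intro k hk
  rw [hN _ (by omega), map_zero, smul_zero]

lemma ezd_add (D : M →ₗ[𝕜] M) {g h : ℤ → M} (hg : HasTrunc g) (hh : HasTrunc h) (n : ℤ) :
    ezd 𝕜 D (fun m => g m + h m) n = ezd 𝕜 D g n + ezd 𝕜 D h n := by
  unfold ezd
  rw [← finsum_add_distrib (ezd_supp D hg n) (ezd_supp D hh n)]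
  exact finsum_congr fun k => by rw [map_add, smul_add]

lemma ezd_zero (D : M →ₗ[𝕜] M) (n : ℤ) : ezd 𝕜 D (fun _ => 0) n = 0 := by
  unfold ezd; simp

lemma prodMap_pow (D : V →ₗ[𝕜] V) (E : W →ₗ[𝕜] W) (k : ℕ) (x : V × W) :
    ((D.prodMap E) ^ k) x = ((D ^ k) x.1, (E ^ k) x.2) := by
  induction k generalizing x with
  | zero => simp
  | succ k ih => simp [pow_succ', Module.End.mul_apply, ih]

lemma finsum_prod {g : ℕ → V × W} (hg : (Function.support g).Finite) :
    ∑ᶠ i, g i = (∑ᶠ i, (g i).1, ∑ᶠ i, (g i).2) := by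
  refine Prod.ext ?_ ?_
  · exact (AddMonoidHom.fst V W).map_finsum hg
  · exact (AddMonoidHom.snd V W).map_finsum hg

lemma ezd_prod (D : V →ₗ[𝕜] V) (E : W →ₗ[𝕜] W) {w : ℤ → V × W}
    (h1 : HasTrunc (fun m => (w m).1)) (h2 : HasTrunc (fun m => (w m).2)) (n : ℤ) :
    ezd 𝕜 (D.prodMap E) w n
      = (ezd 𝕜 D (fun m => (w m).1) n, ezd 𝕜 E (fun m => (w m).2) n) := by
  unfold ezd
  obtain ⟨N1, hN1⟩ := h1
  obtain ⟨N2, hN2⟩ := h2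
  have hsupp : (Function.support fun k : ℕ =>
      ((k.factorial : 𝕜)⁻¹) • ((D.prodMap E) ^ k) (w (n - (k : ℤ)))).Finite := by
    apply supp_fin ((n - N1 + 1).toNat + (n - N2 + 1).toNat)
    intro k hk
    have : w (n - (k : ℤ)) = 0 := Prod.ext (hN1 _ (by omega)) (hN2 _ (by omega))
    rw [this, map_zero, smul_zero]
  rw [finsum_prod hsupp]
  refine Prod.ext ?_ ?_ <;>
    exact finsum_congr fun k => by rw [prodMap_pow]; simp

section Helpers2
variable {𝕜 : Type*} [Field 𝕜] [CharZero 𝕜]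
variable {V W M : Type*} [AddCommGroup V] [Module 𝕜 V] [AddCommGroup W] [Module 𝕜 W]
  [AddCommGroup M] [Module 𝕜 M]

lemma ezd_prod_fst (D : V →ₗ[𝕜] V) (E : W →ₗ[𝕜] W) {w : ℤ → V × W}
    (h1 : HasTrunc (fun m => (w m).1)) (h2 : HasTrunc (fun m => (w m).2)) (n : ℤ) :
    (ezd 𝕜 (D.prodMap E) w n).1 = ezd 𝕜 D (fun m => (w m).1) n := by
  rw [ezd_prod D E h1 h2 n]

lemma ezd_prod_snd (D : V →ₗ[𝕜] V) (E : W →ₗ[𝕜] W) {w : ℤ → V × W}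
    (h1 : HasTrunc (fun m => (w m).1)) (h2 : HasTrunc (fun m => (w m).2)) (n : ℤ) :
    (ezd 𝕜 (D.prodMap E) w n).2 = ezd 𝕜 E (fun m => (w m).2) n := by
  rw [ezd_prod D E h1 h2 n]

lemma unitSeries_comp_fst (a : V) (u : W) :
    (fun m => (unitSeries (a, u) m).1) = unitSeries a := by
  funext m; by_cases h : m = 0 <;> simp [unitSeries, h]

lemma unitSeries_comp_snd (a : V) (u : W) :
    (fun m => (unitSeries (a, u) m).2) = unitSeries u := by
  funext m; by_cases h : m = 0 <;> simp [unitSeries, h]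

lemma unitSeries_zero : unitSeries (0 : M) = fun _ => 0 := by
  funext m; simp [unitSeries]

lemma negz_comp_fst (w : ℤ → V × W) :
    (fun m => (negz w m).1) = negz (fun k => (w k).1) := by
  funext m; simp [negz]

lemma negz_comp_snd (w : ℤ → V × W) :
    (fun m => (negz w m).2) = negz (fun k => (w k).2) := by
  funext m; simp [negz]

lemma shiftComp_supp (F : V → W → ℤ → M) (a : V) {u : ℤ → W}
    (hz : ∀ j, F a 0 j = 0) (hu : HasTrunc u) (m n : ℤ) :
    (Function.support fun i : ℕ =>
      (Ring.choose (m + (i : ℤ)) i) • F a (u (n - (i : ℤ))) (m + (i : ℤ))).Finite := by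
  obtain ⟨N, hN⟩ := hu
  apply supp_fin (n - N + 1).toNat
  intro i hi
  rw [hN _ (by omega), hz, smul_zero]

lemma shiftComp_add_right (F : V → W → ℤ → M) (a : V) {u₀ v₀ : ℤ → W}
    (hlin : ∀ j : ℤ, IsLinearMap 𝕜 (fun x => F a x j))
    (hu : HasTrunc u₀) (hv : HasTrunc v₀) (m n : ℤ) :
    shiftComp F a (fun k => u₀ k + v₀ k) m n = shiftComp F a u₀ m n + shiftComp F a v₀ m n := by
  unfold shiftComp
  rw [← finsum_add_distrib (shiftComp_supp F a (fun j => (hlin j).map_zero) hu m n)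
        (shiftComp_supp F a (fun j => (hlin j).map_zero) hv m n)]
  exact finsum_congr fun i => by rw [(hlin _).map_add, smul_add]

lemma shiftComp_zero_left (F : V → W → ℤ → M) (u : ℤ → W)
    (hz : ∀ (x : W) (j : ℤ), F 0 x j = 0) (m n : ℤ) : shiftComp F 0 u m n = 0 := by
  unfold shiftComp; simp [hz]

lemma mulZW_add (l : ℕ) (F G : ℤ → ℤ → M) (m n : ℤ) :
    mulZW l (fun m n => F m n + G m n) m n = mulZW l F m n + mulZW l G m n := by
  unfold mulZW
  rw [← Finset.sum_add_distrib]
  exact Finset.sum_congr rfl fun k _ => smul_add _ _ _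

lemma mulZW_congr' {l : ℕ} {F G : ℤ → ℤ → M} (h : ∀ m n, F m n = G m n) (m n : ℤ) :
    mulZW l F m n = mulZW l G m n := by
  unfold mulZW
  exact Finset.sum_congr rfl fun k _ => by rw [h]

lemma mulZW_fst (l : ℕ) (F : ℤ → ℤ → V × W) (m n : ℤ) :
    (mulZW l F m n).1 = mulZW l (fun m n => (F m n).1) m n := by
  unfold mulZW
  rw [Prod.fst_sum]
  exact Finset.sum_congr rfl fun k _ => by simp

lemma mulZW_snd (l : ℕ) (F : ℤ → ℤ → V × W) (m n : ℤ) :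
    (mulZW l F m n).2 = mulZW l (fun m n => (F m n).2) m n := by
  unfold mulZW
  rw [Prod.snd_sum]
  exact Finset.sum_congr rfl fun k _ => by simp

lemma mulZW_succ (l : ℕ) (F : ℤ → ℤ → M) (m n : ℤ) :
    mulZW (l + 1) F m n = mulZW l F (m - 1) n + mulZW l F m (n - 1) := by
  unfold mulZW
  rw [Finset.sum_range_succ']
  have e1 : ∀ k ∈ Finset.range (l + 1),
      (((l + 1).choose (k + 1) : ℤ)) • F (m - ((l + 1 - (k + 1) : ℕ) : ℤ)) (n - ((k + 1 : ℕ) : ℤ))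
      = ((l.choose k : ℤ)) • F (m - ((l - k : ℕ) : ℤ)) ((n - 1) - (k : ℤ))
        + ((l.choose (k + 1) : ℤ)) • F (m - ((l - k : ℕ) : ℤ)) (n - ((k + 1 : ℕ) : ℤ)) := by
    intro k hk
    rw [Nat.succ_sub_succ, Nat.choose_succ_succ]
    push_cast
    rw [add_smul]
    have e : n - ((k : ℤ) + 1) = n - 1 - (k : ℤ) := by ring
    rw [e]
  rw [Finset.sum_congr rfl e1, Finset.sum_add_distrib]
  have e3 : ∑ k ∈ Finset.range (l + 1),
        ((l.choose (k + 1) : ℤ)) • F (m - ((l - k : ℕ) : ℤ)) (n - ((k + 1 : ℕ) : ℤ))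
        + (((l + 1).choose 0 : ℤ)) • F (m - ((l + 1 - 0 : ℕ) : ℤ)) (n - ((0 : ℕ) : ℤ))
      = ∑ k ∈ Finset.range (l + 1), (l.choose k : ℤ) • F (m - 1 - ((l - k : ℕ) : ℤ)) (n - (k : ℤ)) := by
    rw [Finset.sum_range_succ' (fun k => (l.choose k : ℤ) • F (m - 1 - ((l - k : ℕ) : ℤ)) (n - (k : ℤ))) l]
    congr 1
    · rw [Finset.sum_range_succ]
      rw [Nat.choose_succ_self, Nat.cast_zero, zero_smul, add_zero]
      refine Finset.sum_congr rfl fun k hk => ?_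
      have hkl : k < l := Finset.mem_range.mp hk
      congr 2
      · rw [Nat.cast_sub (by omega), Nat.cast_sub (by omega)]
        push_cast
        ring
    · simp only [Nat.choose_zero_right, Nat.sub_zero, Nat.cast_one, one_smul, Nat.cast_zero,
        sub_zero]
      congr 1
      push_cast
      ring
  rw [add_assoc, e3, add_comm]

lemma mulZW_lift {l l' : ℕ} {F G : ℤ → ℤ → M} (h : mulZW l F = mulZW l G) (hle : l ≤ l') :
    mulZW l' F = mulZW l' G := by
  induction l', hle using Nat.le_induction with
  | base => exact h
  | succ k hk ih =>
    funext m n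
    rw [mulZW_succ, mulZW_succ, ih]
end Helpers2
section Helpers3
set_option linter.unusedSectionVars false
variable {𝕜 : Type*} [Field 𝕜] [CharZero 𝕜]
variable {V : Type*} [AddCommGroup V] [Module 𝕜 V]

lemma shiftComp_defY (Y f : V → V → ℤ → V)
    (hYr : ∀ (a : V) (n : ℤ), IsLinearMap 𝕜 (fun b => Y a b n))
    (hfr : ∀ (a : V) (n : ℤ), IsLinearMap 𝕜 (fun b => f a b n))
    (p : V × V) (u : ℤ → V × V)
    (h1 : HasTrunc (fun k => (u k).1)) (h2 : HasTrunc (fun k => (u k).2)) (m n : ℤ) :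
    shiftComp (defY Y f) p u m n
      = (shiftComp Y p.1 (fun k => (u k).1) m n,
         shiftComp Y p.1 (fun k => (u k).2) m n + shiftComp Y p.2 (fun k => (u k).1) m n
           + shiftComp f p.1 (fun k => (u k).1) m n) := by
  have hdz : defY Y f p (0 : V × V) = fun _ => (0 : V × V) := by
    funext j
    show ((Y p.1 0 j : V), Y p.1 0 j + Y p.2 0 j + f p.1 0 j) = (0 : V × V)
    rw [(hYr p.1 j).map_zero, (hYr p.2 j).map_zero, (hfr p.1 j).map_zero]
    simp
  have hsupp : (Function.support fun i : ℕ =>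
      (Ring.choose (m + (i : ℤ)) i) • defY Y f p (u (n - (i : ℤ))) (m + (i : ℤ))).Finite := by
    obtain ⟨N1, hN1⟩ := h1
    obtain ⟨N2, hN2⟩ := h2
    apply supp_fin ((n - N1 + 1).toNat + (n - N2 + 1).toNat)
    intro i hi
    have hu : u (n - (i : ℤ)) = 0 := Prod.ext (hN1 _ (by omega)) (hN2 _ (by omega))
    rw [hu, congrFun hdz (m + (i : ℤ)), smul_zero]
  show ∑ᶠ i : ℕ, (Ring.choose (m + (i : ℤ)) i) • defY Y f p (u (n - (i : ℤ))) (m + (i : ℤ)) = _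
  rw [finsum_prod hsupp]
  refine Prod.ext ?_ ?_
  · exact finsum_congr fun i => by rw [Prod.smul_fst]; rfl
  · show ∑ᶠ i : ℕ, ((Ring.choose (m + (i : ℤ)) i)
        • defY Y f p (u (n - (i : ℤ))) (m + (i : ℤ))).2 = _
    have e : ∀ i : ℕ, ((Ring.choose (m + (i : ℤ)) i)
          • defY Y f p (u (n - (i : ℤ))) (m + (i : ℤ))).2
        = (Ring.choose (m + (i : ℤ)) i) • Y p.1 (u (n - (i : ℤ))).2 (m + (i : ℤ))
          + ((Ring.choose (m + (i : ℤ)) i) • Y p.2 (u (n - (i : ℤ))).1 (m + (i : ℤ))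
            + (Ring.choose (m + (i : ℤ)) i) • f p.1 (u (n - (i : ℤ))).1 (m + (i : ℤ))) := by
      intro i
      rw [Prod.smul_snd]
      show (Ring.choose (m + (i : ℤ)) i) • (_ + _ + _) = _
      rw [smul_add, smul_add, add_assoc]
    rw [finsum_congr e]
    have s1 := shiftComp_supp Y p.1 (fun j => (hYr p.1 j).map_zero) h2 m n
    have s2 := shiftComp_supp Y p.2 (fun j => (hYr p.2 j).map_zero) h1 m n
    have s3 := shiftComp_supp f p.1 (fun j => (hfr p.1 j).map_zero) h1 m n
    rw [finsum_add_distrib s1 (Set.Finite.subset (s2.union s3) (Function.support_add _ _)),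
      finsum_add_distrib s2 s3, ← add_assoc]
    rfl
end Helpers3

lemma mulZW_add4' {M : Type*} [AddCommGroup M] (l : ℕ) (F1 F2 F3 F4 : ℤ → ℤ → M) (m n : ℤ) :
    mulZW l (fun m n => (F1 m n + F2 m n + F3 m n) + F4 m n) m n
      = (mulZW l F1 m n + mulZW l F2 m n + mulZW l F3 m n) + mulZW l F4 m n := by
  unfold mulZW
  rw [← Finset.sum_add_distrib, ← Finset.sum_add_distrib, ← Finset.sum_add_distrib]
  exact Finset.sum_congr rfl fun k _ => by rw [smul_add, smul_add, smul_add]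

end Helpers



variable (𝕜 : Type*) [Field 𝕜] [CharZero 𝕜]
  {V : Type*} [AddCommGroup V] [Module 𝕜 V]
  (Y : V → V → ℤ → V) (one : V) (D : V →ₗ[𝕜] V)

/-- `a_z^t b = a_z b + t f_z(a,b)` is a first order deformation of `V`
(all vertex algebra axioms hold modulo `t²`, with unchanged vacuum and translation
operator) iff `f ∈ Z²(V,V)`. -/
theorem deformation_iff_Z2
    (hV : IsVertexAlg 𝕜 Y one D) (f : V → V → ℤ → V)
    (hfl : ∀ (b : V) (n : ℤ), IsLinearMap 𝕜 (fun a => f a b n))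
    (hfr : ∀ (a : V) (n : ℤ), IsLinearMap 𝕜 (fun b => f a b n))
    (hft : ∀ a b, ∃ N : ℤ, ∀ n < N, f a b n = 0) :
    ((∀ p : V × V, defY Y f ((one, 0) : V × V) p = unitSeries p) ∧
      (∀ p : V × V, defY Y f p ((one, 0) : V × V) = ezd 𝕜 (D.prodMap D) (unitSeries p)) ∧
      (∀ p q : V × V, defY Y f (D.prodMap D p) q = derivz (defY Y f p q)) ∧
      (∀ (p q : V × V) (n : ℤ), D.prodMap D (defY Y f p q n)
        = defY Y f (D.prodMap D p) q n + defY Y f p (D.prodMap D q) n) ∧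
      (∀ p q : V × V, defY Y f p q = ezd 𝕜 (D.prodMap D) (negz (defY Y f q p))) ∧
      (∀ p q r : V × V, ∃ l : ℕ,
        mulZW l (fun m n => defY Y f (defY Y f p q m) r n)
          = mulZW l (shiftComp (defY Y f) p (defY Y f q r))))
    ↔ ((∀ a : V, (∀ n, f a one n = 0) ∧ (∀ n, f one a n = 0)) ∧
        (∀ a b : V, derivz (f a b) = f (D a) b) ∧
        (∀ (a b : V) (n : ℤ), D (f a b n) = f (D a) b n + f a (D b) n) ∧
        (∀ a b : V, f a b = ezd 𝕜 D (negz (f b a))) ∧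
        Cocycle 𝕜 Y Y D f) := by
  have Yz0 : ∀ (a : V) (n : ℤ), Y a 0 n = 0 := fun a n => (hV.linear_right a n).map_zero
  have Y0z : ∀ (b : V) (n : ℤ), Y 0 b n = 0 := fun b n => (hV.linear_left b n).map_zero
  have fz0 : ∀ (a : V) (n : ℤ), f a 0 n = 0 := fun a n => (hfr a n).map_zero
  have f0z : ∀ (b : V) (n : ℤ), f 0 b n = 0 := fun b n => (hfl b n).map_zero
  have hYadd : ∀ (x y b : V) (n : ℤ), Y (x + y) b n = Y x b n + Y y b n :=
    fun x y b n => (hV.linear_left b n).map_add x y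
  have rAct_eq : ∀ (x a : V), rAct 𝕜 Y D x a = Y x a := fun x a => (hV.comm x a).symm
  have trY : ∀ a b : V, HasTrunc (Y a b) := hV.trunc
  have trf : ∀ a b : V, HasTrunc (f a b) := hft
  constructor
  · rintro ⟨H1, H2, H3, H4, H5, H6⟩
    refine ⟨fun a => ⟨fun n => ?_, fun n => ?_⟩, fun a b => ?_, fun a b n => ?_,
      fun a b => ?_, fun a b c => ?_⟩
    · -- f a one = 0
      have h := congrArg Prod.snd (congrFun (H2 (a, 0)) n)
      rw [ezd_prod_snd D D
          (by rw [unitSeries_comp_fst]; exact hasTrunc_unitSeries a)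
          (by rw [unitSeries_comp_snd]; exact hasTrunc_unitSeries 0) n,
        unitSeries_comp_snd, unitSeries_zero, ezd_zero] at h
      simpa [defY, Yz0, Y0z] using h
    · -- f one a = 0
      have h := congrArg Prod.snd (congrFun (H1 (a, 0)) n)
      simpa [defY, Yz0, Y0z, unitSeries, apply_ite] using h
    · -- transl
      funext n
      have h := congrArg Prod.snd (congrFun (H3 (a, 0) (b, 0)) n)
      simp only [LinearMap.prodMap_apply, map_zero, defY, derivz, Prod.smul_snd,
        Yz0, Y0z, zero_add, add_zero] at h
      simpa [derivz] using h.symm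
    · -- derivation
      have h := congrArg Prod.snd (H4 (a, 0) (b, 0) n)
      simpa [defY, LinearMap.prodMap_apply, Yz0, Y0z, map_zero] using h
    · -- symm
      funext n
      have h := congrArg Prod.snd (congrFun (H5 (a, 0) (b, 0)) n)
      rw [ezd_prod_snd D D
          (by rw [negz_comp_fst]; exact (trY b a).neg)
          (by rw [negz_comp_snd]
              exact (((trY b 0).add (trY 0 a)).add (trf b a)).neg) n,
        negz_comp_snd] at h
      simpa [defY, Yz0, Y0z] using h
    · -- cocycle
      obtain ⟨l, hl⟩ := H6 (a, 0) (b, 0) (c, 0)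
      refine ⟨l, ?_⟩
      funext m n
      have h := congrArg Prod.snd (congrFun (congrFun hl m) n)
      rw [mulZW_snd, mulZW_snd] at h
      have eL : ∀ m' n' : ℤ, (defY Y f (defY Y f (a, 0) (b, 0) m') (c, 0) n').2
          = f (Y a b m') c n' + rAct 𝕜 Y D (f a b m') c n' := by
        intro m' n'
        simp only [defY, Yz0, Y0z, zero_add, add_zero, rAct_eq]
        exact add_comm _ _
      have eR : ∀ m' n' : ℤ, (shiftComp (defY Y f) (a, 0) (defY Y f (b, 0) (c, 0)) m' n').2
          = shiftComp Y a (f b c) m' n' + shiftComp f a (Y b c) m' n' := by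
        intro m' n'
        rw [shiftComp_defY Y f hV.linear_right hfr (a, 0) (defY Y f (b, 0) (c, 0))
          (trY b c) (((trY b 0).add (trY 0 c)).add (trf b c)) m' n']
        show shiftComp Y a (fun k => (defY Y f (b, 0) (c, 0) k).2) m' n'
            + shiftComp Y 0 (fun k => (defY Y f (b, 0) (c, 0) k).1) m' n'
            + shiftComp f a (fun k => (defY Y f (b, 0) (c, 0) k).1) m' n' = _
        rw [shiftComp_zero_left Y _ Y0z, add_zero]
        have e1 : (fun k => (defY Y f (b, 0) (c, 0) k).2) = f b c := by
          funext k; simp [defY, Yz0, Y0z]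
        rw [e1]
        rfl
      calc mulZW l (fun m n => f (Y a b m) c n + rAct 𝕜 Y D (f a b m) c n) m n
          = mulZW l (fun m n => (defY Y f (defY Y f (a, 0) (b, 0) m) (c, 0) n).2) m n :=
            mulZW_congr' (fun m' n' => (eL m' n').symm) m n
        _ = mulZW l (fun m n => shiftComp Y a (f b c) m n + shiftComp f a (Y b c) m n) m n := by
            rw [show mulZW l (fun m n => (defY Y f (defY Y f (a, 0) (b, 0) m) (c, 0) n).2) m n
                = mulZW l (fun m n => (shiftComp (defY Y f) (a, 0) (defY Y f (b, 0) (c, 0)) m n).2)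
                  m n from h]
            exact mulZW_congr' eR m n
  · rintro ⟨Hunit, Htransl, Hder, Hsymm, Hcoc⟩
    have fz1 : ∀ (a : V) (n : ℤ), f a one n = 0 := fun a n => (Hunit a).1 n
    have f1z : ∀ (a : V) (n : ℤ), f one a n = 0 := fun a n => (Hunit a).2 n
    refine ⟨?_, ?_, ?_, ?_, ?_, ?_⟩
    · -- unit_left
      rintro ⟨a, u⟩
      funext n
      show defY Y f (one, 0) (a, u) n = unitSeries (a, u) n
      have e : defY Y f (one, 0) (a, u) n = (Y one a n, Y one u n) := by
        show (Y one a n, Y one u n + Y 0 a n + f one a n) = _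
        rw [Y0z, f1z, add_zero, add_zero]
      rw [e, congrFun (hV.unit_left a) n, congrFun (hV.unit_left u) n]
      by_cases h : n = 0 <;> simp [unitSeries, h]
    · -- unit_right
      rintro ⟨a, u⟩
      funext n
      rw [ezd_prod D D
          (by rw [unitSeries_comp_fst]; exact hasTrunc_unitSeries a)
          (by rw [unitSeries_comp_snd]; exact hasTrunc_unitSeries u) n,
        unitSeries_comp_fst, unitSeries_comp_snd]
      refine Prod.ext ?_ ?_
      · exact congrFun (hV.unit_right a) n
      · show Y a 0 n + Y u one n + f a one n = _
        rw [Yz0, fz1, zero_add, add_zero]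
        exact congrFun (hV.unit_right u) n
    · -- transl
      rintro ⟨a, u⟩ ⟨b, v⟩
      funext n
      simp only [LinearMap.prodMap_apply]
      show (Y (D a) b n, Y (D a) v n + Y (D u) b n + f (D a) b n)
          = derivz (defY Y f (a, u) (b, v)) n
      have e : derivz (defY Y f (a, u) (b, v)) n
          = ((n + 1) • Y a b (n + 1),
              (n + 1) • (Y a v (n + 1) + Y u b (n + 1) + f a b (n + 1))) := by
        show (n + 1) • defY Y f (a, u) (b, v) (n + 1) = _
        rw [show defY Y f (a, u) (b, v) (n + 1)
            = (Y a b (n + 1), Y a v (n + 1) + Y u b (n + 1) + f a b (n + 1)) from rfl,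
          Prod.smul_mk]
      rw [e]
      refine Prod.ext ?_ ?_
      · exact congrFun (hV.transl a b) n
      · show Y (D a) v n + Y (D u) b n + f (D a) b n = _
        have t1 : Y (D a) v n = (n + 1) • Y a v (n + 1) := congrFun (hV.transl a v) n
        have t2 : Y (D u) b n = (n + 1) • Y u b (n + 1) := congrFun (hV.transl u b) n
        have t3 : f (D a) b n = (n + 1) • f a b (n + 1) := (congrFun (Htransl a b) n).symm
        rw [t1, t2, t3, smul_add, smul_add]
    · -- derivation
      rintro ⟨a, u⟩ ⟨b, v⟩ n
      simp only [LinearMap.prodMap_apply]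
      refine Prod.ext ?_ ?_
      · show D (Y a b n) = Y (D a) b n + Y a (D b) n
        exact hV.derivation a b n
      · show D (Y a v n + Y u b n + f a b n)
            = (Y (D a) v n + Y (D u) b n + f (D a) b n)
              + (Y a (D v) n + Y u (D b) n + f a (D b) n)
        rw [map_add, map_add, hV.derivation, hV.derivation, Hder]
        abel
    · -- comm
      rintro ⟨a, u⟩ ⟨b, v⟩
      funext n
      rw [ezd_prod D D
          (by rw [negz_comp_fst]; exact (trY b a).neg)
          (by rw [negz_comp_snd]
              exact (((trY b u).add (trY v a)).add (trf b a)).neg) n]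
      refine Prod.ext ?_ ?_
      · show Y a b n = ezd 𝕜 D (fun m => (negz (defY Y f (b, v) (a, u)) m).1) n
        rw [negz_comp_fst]
        exact congrFun (hV.comm a b) n
      · show Y a v n + Y u b n + f a b n
            = ezd 𝕜 D (fun m => (negz (defY Y f (b, v) (a, u)) m).2) n
        rw [negz_comp_snd]
        have e : ezd 𝕜 D (negz (fun k => (defY Y f (b, v) (a, u) k).2)) n
            = ezd 𝕜 D (fun k => negz (fun k => Y b u k + Y v a k) k + negz (f b a) k) n := by
          congr 1
          funext k
          show (k.negOnePow : ℤ) • (Y b u k + Y v a k + f b a k) = _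
          rw [smul_add]
          rfl
        rw [e, ezd_add D (((trY b u).add (trY v a)).neg) ((trf b a).neg) n]
        have e2 : ezd 𝕜 D (negz (fun k => Y b u k + Y v a k)) n
            = ezd 𝕜 D (fun k => negz (Y b u) k + negz (Y v a) k) n := by
          congr 1
          funext k
          exact smul_add _ _ _
        rw [e2, ezd_add D ((trY b u).neg) ((trY v a).neg) n,
          ← congrFun (hV.comm u b) n, ← congrFun (hV.comm a v) n, ← congrFun (Hsymm a b) n]
        abel
    · -- assoc
      rintro ⟨a, u⟩ ⟨b, v⟩ ⟨c, w⟩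
      obtain ⟨l0, h0⟩ := hV.assoc a b c
      obtain ⟨l1, h1⟩ := hV.assoc a b w
      obtain ⟨l2, h2⟩ := hV.assoc a v c
      obtain ⟨l3, h3⟩ := hV.assoc u b c
      obtain ⟨l4, h4⟩ := Hcoc a b c
      refine ⟨l0 + l1 + l2 + l3 + l4, ?_⟩
      set L := l0 + l1 + l2 + l3 + l4 with hL
      replace h0 := mulZW_lift h0 (by omega : l0 ≤ L)
      replace h1 := mulZW_lift h1 (by omega : l1 ≤ L)
      replace h2 := mulZW_lift h2 (by omega : l2 ≤ L)
      replace h3 := mulZW_lift h3 (by omega : l3 ≤ L)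
      replace h4 := mulZW_lift h4 (by omega : l4 ≤ L)
      funext m n
      refine Prod.ext ?_ ?_
      · rw [mulZW_fst, mulZW_fst]
        calc mulZW L (fun m n => (defY Y f (defY Y f (a, u) (b, v) m) (c, w) n).1) m n
            = mulZW L (fun m n => Y (Y a b m) c n) m n := mulZW_congr' (fun _ _ => rfl) m n
          _ = mulZW L (shiftComp Y a (Y b c)) m n := congrFun (congrFun h0 m) n
          _ = mulZW L
              (fun m n => (shiftComp (defY Y f) (a, u) (defY Y f (b, v) (c, w)) m n).1) m n := by
              refine mulZW_congr' (fun m' n' => ?_) m n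
              rw [shiftComp_defY Y f hV.linear_right hfr (a, u) (defY Y f (b, v) (c, w))
                (trY b c) (((trY b w).add (trY v c)).add (trf b c)) m' n']
              rfl
      · rw [mulZW_snd, mulZW_snd]
        have eL : ∀ m' n' : ℤ, (defY Y f (defY Y f (a, u) (b, v) m') (c, w) n').2
            = (Y (Y a b m') w n' + Y (Y a v m') c n' + Y (Y u b m') c n')
              + (f (Y a b m') c n' + rAct 𝕜 Y D (f a b m') c n') := by
          intro m' n'
          show Y (Y a b m') w n' + Y (Y a v m' + Y u b m' + f a b m') c n'
              + f (Y a b m') c n' = _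
          rw [hYadd, hYadd, rAct_eq]
          abel
        have eR : ∀ m' n' : ℤ, (shiftComp (defY Y f) (a, u) (defY Y f (b, v) (c, w)) m' n').2
            = (shiftComp Y a (Y b w) m' n' + shiftComp Y a (Y v c) m' n'
                + shiftComp Y u (Y b c) m' n')
              + (shiftComp Y a (f b c) m' n' + shiftComp f a (Y b c) m' n') := by
          intro m' n'
          rw [shiftComp_defY Y f hV.linear_right hfr (a, u) (defY Y f (b, v) (c, w))
            (trY b c) (((trY b w).add (trY v c)).add (trf b c)) m' n']
          show shiftComp Y a (fun k => (defY Y f (b, v) (c, w) k).2) m' n'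
              + shiftComp Y u (fun k => (defY Y f (b, v) (c, w) k).1) m' n'
              + shiftComp f a (fun k => (defY Y f (b, v) (c, w) k).1) m' n' = _
          have A : shiftComp Y a (fun k => (defY Y f (b, v) (c, w) k).2) m' n'
              = shiftComp Y a (fun k => Y b w k + Y v c k) m' n'
                + shiftComp Y a (f b c) m' n' :=
            shiftComp_add_right Y a (hV.linear_right a)
              ((trY b w).add (trY v c)) (trf b c) m' n'
          have B : shiftComp Y a (fun k => Y b w k + Y v c k) m' n'
              = shiftComp Y a (Y b w) m' n' + shiftComp Y a (Y v c) m' n' :=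
            shiftComp_add_right Y a (hV.linear_right a) (trY b w) (trY v c) m' n'
          have C : shiftComp Y u (fun k => (defY Y f (b, v) (c, w) k).1) m' n'
              = shiftComp Y u (Y b c) m' n' := rfl
          have C2 : shiftComp f a (fun k => (defY Y f (b, v) (c, w) k).1) m' n'
              = shiftComp f a (Y b c) m' n' := rfl
          rw [A, B, C, C2]
          abel
        calc mulZW L (fun m n => (defY Y f (defY Y f (a, u) (b, v) m) (c, w) n).2) m n
            = mulZW L (fun m n => (Y (Y a b m) w n + Y (Y a v m) c n + Y (Y u b m) c n)
                + (f (Y a b m) c n + rAct 𝕜 Y D (f a b m) c n)) m n := mulZW_congr' eL m n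
          _ = (mulZW L (fun m n => Y (Y a b m) w n) m n
                + mulZW L (fun m n => Y (Y a v m) c n) m n
                + mulZW L (fun m n => Y (Y u b m) c n) m n)
              + mulZW L (fun m n => f (Y a b m) c n + rAct 𝕜 Y D (f a b m) c n) m n :=
            mulZW_add4' L _ _ _ _ m n
          _ = (mulZW L (shiftComp Y a (Y b w)) m n
                + mulZW L (shiftComp Y a (Y v c)) m n
                + mulZW L (shiftComp Y u (Y b c)) m n)
              + mulZW L (fun m n => shiftComp Y a (f b c) m n
                  + shiftComp f a (Y b c) m n) m n := by
            rw [h1, h2, h3, h4]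
          _ = mulZW L (fun m n => (shiftComp Y a (Y b w) m n + shiftComp Y a (Y v c) m n
                + shiftComp Y u (Y b c) m n)
              + (shiftComp Y a (f b c) m n + shiftComp f a (Y b c) m n)) m n :=
            (mulZW_add4' L _ _ _ _ m n).symm
          _ = mulZW L
              (fun m n => (shiftComp (defY Y f) (a, u) (defY Y f (b, v) (c, w)) m n).2) m n :=
            mulZW_congr' (fun m' n' => (eR m' n').symm) m n

end VertexCohomology
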